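/- Each of the four expansion rules (⊓-rule, ∃₁-rule, ∃₂-rule, ⊑-rule) preserves consistency: if O = A ∪ T is a consistent EL_⊥ ontology with normalized TBox T, then the ontology A' ∪ T obtained by one application of any expansion rule is consistent. -/
import Mathlib


/-! Basic syntax and semantics of the description logic EL_⊥. -/

/-- EL_⊥ concepts over concept names `C` and role names `R`. -/
inductive ELConcept (C R : Type) : Type
  | top  : ELConcept C R
  | bot  : ELConcept C R
  | atom : C → ELConcept C R
  | conj : ELConcept C R → ELConcept C R → ELConcept C R
  | ex   : R → ELConcept C R → ELConcept C R

/-- A general concept inclusion (GCI) `C ⊑ D`. -/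
abbrev GCI (C R : Type) := ELConcept C R × ELConcept C R

/-- A TBox is a set of GCIs. -/
abbrev TBox (C R : Type) := Set (GCI C R)

/-- ABox assertions: concept assertions `C(a)` and role assertions `r(a,b)`. -/
inductive Assertion (C R Ind : Type) : Type
  | concept : ELConcept C R → Ind → Assertion C R Ind
  | role    : R → Ind → Ind → Assertion C R Ind

/-- An ABox is a set of assertions. -/
abbrev ABox (C R Ind : Type) := Set (Assertion C R Ind)

/-- An interpretation with domain `δ`, interpreting concept names, role names
and individual names. -/
structure Interp (C R Ind δ : Type) where
  atomI : C → Set δ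
  roleI : R → Set (δ × δ)
  indI  : Ind → δ

/-- Semantics of concepts. -/
def Interp.sem {C R Ind δ : Type} (I : Interp C R Ind δ) : ELConcept C R → Set δ
  | .top => Set.univ
  | .bot => ∅
  | .atom A => I.atomI A
  | .conj c d => I.sem c ∩ I.sem d
  | .ex r c => {x | ∃ y, (x, y) ∈ I.roleI r ∧ y ∈ I.sem c}

/-- `I` satisfies a GCI `C ⊑ D` iff `C^I ⊆ D^I`. -/
def Interp.satGCI {C R Ind δ : Type} (I : Interp C R Ind δ) (g : GCI C R) : Prop :=
  I.sem g.1 ⊆ I.sem g.2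

/-- `I` is a model of a TBox. -/
def Interp.modelT {C R Ind δ : Type} (I : Interp C R Ind δ) (T : TBox C R) : Prop :=
  ∀ g ∈ T, I.satGCI g

/-- `I` satisfies an assertion. -/
def Interp.satA {C R Ind δ : Type} (I : Interp C R Ind δ) : Assertion C R Ind → Prop
  | .concept c a => I.indI a ∈ I.sem c
  | .role r a b => (I.indI a, I.indI b) ∈ I.roleI r

/-- `I` is a model of an ABox. -/
def Interp.modelA {C R Ind δ : Type} (I : Interp C R Ind δ) (A : ABox C R Ind) : Prop :=
  ∀ ax ∈ A, I.satA ax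

/-- `I` is a model of the ontology `O = A ∪ T`. -/
def Interp.modelO {C R Ind δ : Type} (I : Interp C R Ind δ) (A : ABox C R Ind)
    (T : TBox C R) : Prop :=
  I.modelA A ∧ I.modelT T

/-- TBox entailment of a GCI: every model of `T` satisfies the GCI. -/
def entailsT {C R : Type} (T : TBox C R) (g : GCI C R) : Prop :=
  ∀ (Ind δ : Type) (I : Interp C R Ind δ), I.modelT T → I.satGCI g

/-- The ontology `A ∪ T` is consistent iff it has a model. -/
def consistentO {C R Ind : Type} (A : ABox C R Ind) (T : TBox C R) : Prop :=
  ∃ (δ : Type) (I : Interp C R Ind δ), I.modelO A T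

/-- Entailment of an assertion from an ontology `A ∪ T`. -/
def entailsO {C R Ind : Type} (A : ABox C R Ind) (T : TBox C R)
    (ax : Assertion C R Ind) : Prop :=
  ∀ (δ : Type) (I : Interp C R Ind δ), I.modelO A T → I.satA ax

/-- Occurrence of a concept name in a concept. -/
def occursName {C R : Type} (B : C) : ELConcept C R → Prop
  | .atom A => A = B
  | .conj c d => occursName B c ∨ occursName B d
  | .ex _ c => occursName B c
  | _ => False

/-- Occurrence of a concept name in a TBox. -/
def occursNameT {C R : Type} (B : C) (T : TBox C R) : Prop :=
  ∃ g ∈ T, occursName B g.1 ∨ occursName B g.2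

/-- A concept is ⊥-free (i.e. an EL concept). -/
def botFree {C R : Type} : ELConcept C R → Prop
  | .bot => False
  | .conj c d => botFree c ∧ botFree d
  | .ex _ c => botFree c
  | _ => True

/-- The top-level conjuncts `At(D)` of a concept `D`: the conjuncts of `D`
if `D` is a conjunction, and `{D}` otherwise. -/
def At {C R : Type} : ELConcept C R → Set (ELConcept C R)
  | .conj c d => At c ∪ At d
  | c => {c}

/-- A concept that is a concept name or `⊤`. -/
def atomicOrTop {C R : Type} (c : ELConcept C R) : Prop :=
  c = ELConcept.top ∨ ∃ A, c = ELConcept.atom A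

/-- A basic concept: a concept name, `⊤`, or `⊥`. -/
def isBasic {C R : Type} (c : ELConcept C R) : Prop :=
  c = ELConcept.top ∨ c = ELConcept.bot ∨ ∃ A, c = ELConcept.atom A

/-- Axioms of a normalized EL_⊥ TBox: `A ⊑ B`, `A₁ ⊓ A₂ ⊑ B`, `∃r.A ⊑ B`,
or `A ⊑ ∃r.B`, with `A, A₁, A₂, B` concept names, `⊤`, or `⊥`. -/
def normalizedAxiom {C R : Type} (g : GCI C R) : Prop :=
  (isBasic g.1 ∧ isBasic g.2) ∨
  (∃ A1 A2, isBasic A1 ∧ isBasic A2 ∧ g.1 = ELConcept.conj A1 A2 ∧ isBasic g.2) ∨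
  (∃ r A, isBasic A ∧ g.1 = ELConcept.ex r A ∧ isBasic g.2) ∨
  (∃ r B, isBasic B ∧ g.2 = ELConcept.ex r B ∧ isBasic g.1)

/-- A normalized TBox. -/
def normalized {C R : Type} (T : TBox C R) : Prop :=
  ∀ g ∈ T, normalizedAxiom g

/-- The left-hand side `L` of a TBox axiom is witnessed at `a` in `A`. -/
def witnessed {C R Ind : Type} (A : ABox C R Ind) (L : ELConcept C R) (a : Ind) : Prop :=
  Assertion.concept L a ∈ A ∨
  ∃ c d, L = ELConcept.conj c d ∧ Assertion.concept c a ∈ A ∧ Assertion.concept d a ∈ A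

/-- An assertion mentions the individual `d`. -/
def Assertion.mentions {C R Ind : Type} (d : Ind) : Assertion C R Ind → Prop
  | .concept _ a => a = d
  | .role _ a b => a = d ∨ b = d

/-- The individual `d` occurs in the ABox `A`. -/
def mentionsA {C R Ind : Type} (d : Ind) (A : ABox C R Ind) : Prop :=
  ∃ ax ∈ A, ax.mentions d

/-- The expansion rules other than the ∃₂-rule: the ⊓-rule, the ∃₁-rule and
the ⊑-rule. -/
inductive StepCore {C R Ind : Type} (T : TBox C R) : ABox C R Ind → ABox C R Ind → Prop
  | conjRule {A : ABox C R Ind} {D c : ELConcept C R} {a : Ind} :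
      Assertion.concept D a ∈ A → c ∈ At D → Assertion.concept c a ∉ A →
      StepCore T A (insert (Assertion.concept c a) A)
  | ex1 {A : ABox C R Ind} {r : R} {a b : Ind} {B : ELConcept C R} :
      Assertion.role r a b ∈ A → Assertion.concept B b ∈ A → atomicOrTop B →
      Assertion.concept (ELConcept.ex r B) a ∉ A →
      StepCore T A (insert (Assertion.concept (ELConcept.ex r B) a) A)
  | sub {A : ABox C R Ind} {g : GCI C R} {a : Ind} :
      g ∈ T → witnessed A g.1 a → Assertion.concept g.2 a ∉ A →
      StepCore T A (insert (Assertion.concept g.2 a) A)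

/-- The ∃₂-rule, parameterized by a guard `good` describing when an existing
individual may be reused as a successor. A fresh individual is introduced
only if no existing individual can be reused. -/
inductive StepEx {C R Ind : Type} (good : ABox C R Ind → Prop) :
    ABox C R Ind → ABox C R Ind → Prop
  | reuse {A : ABox C R Ind} {r : R} {a c : Ind} {E : ELConcept C R} :
      Assertion.concept (ELConcept.ex r E) a ∈ A →
      (¬ ∃ b, Assertion.role r a b ∈ A ∧ Assertion.concept E b ∈ A) →
      good (insert (Assertion.role r a c) (insert (Assertion.concept E c) A)) →
      StepEx good A (insert (Assertion.role r a c) (insert (Assertion.concept E c) A))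
  | fresh {A : ABox C R Ind} {r : R} {a d : Ind} {E : ELConcept C R} :
      Assertion.concept (ELConcept.ex r E) a ∈ A →
      (¬ ∃ b, Assertion.role r a b ∈ A ∧ Assertion.concept E b ∈ A) →
      (¬ ∃ c, good (insert (Assertion.role r a c) (insert (Assertion.concept E c) A))) →
      ¬ mentionsA d A →
      StepEx good A (insert (Assertion.role r a d) (insert (Assertion.concept E d)
        (insert (Assertion.concept ELConcept.top d) A)))

/-- One application of any expansion rule. -/
def Step {C R Ind : Type} (T : TBox C R) (good : ABox C R Ind → Prop)
    (A A' : ABox C R Ind) : Prop :=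
  StepCore T A A' ∨ StepEx good A A'

/-- One application of an expansion rule under the strategy that the ∃₂-rule
is applied only when no other rule is applicable. -/
def StepPr {C R Ind : Type} (T : TBox C R) (good : ABox C R Ind → Prop)
    (A A' : ABox C R Ind) : Prop :=
  StepCore T A A' ∨ ((¬ ∃ B, StepCore T A B) ∧ StepEx good A A')

/-- An ABox is complete if no expansion rule is applicable. -/
def completeA {C R Ind : Type} (T : TBox C R) (good : ABox C R Ind → Prop)
    (A' : ABox C R Ind) : Prop :=
  ¬ ∃ A'', Step T good A' A''

/-- An ABox is clash-free if it contains no assertion `⊥(a)`. -/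
def clashFree {C R Ind : Type} (A' : ABox C R Ind) : Prop :=
  ∀ a, Assertion.concept ELConcept.bot a ∉ A'

/-- The interpretation induced from an ABox: `a^I = a`,
`A^I = {a | A(a) ∈ A'}`, `r^I = {(a,b) | r(a,b) ∈ A'}`. -/
def induced {C R Ind : Type} (A' : ABox C R Ind) : Interp C R Ind Ind where
  atomI := fun B => {a | Assertion.concept (ELConcept.atom B) a ∈ A'}
  roleI := fun r => {p | Assertion.role r p.1 p.2 ∈ A'}
  indI := id


lemma At_sem {C R Ind δ : Type} (I : Interp C R Ind δ) :
    ∀ (D c : ELConcept C R), c ∈ At D → I.sem D ⊆ I.sem c := by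
  intro D
  induction D with
  | conj c d ihc ihd =>
    intro e he x hx
    rcases he with h | h
    · exact ihc e h hx.1
    · exact ihd e h hx.2
  | top => intro e he; cases he; exact subset_rfl
  | bot => intro e he; cases he; exact subset_rfl
  | atom A => intro e he; cases he; exact subset_rfl
  | ex r c ih => intro e he; cases he; exact subset_rfl

lemma sem_eq_of {C R Ind δ : Type} (I I' : Interp C R Ind δ)
    (ha : I.atomI = I'.atomI) (hr : I.roleI = I'.roleI) :
    ∀ c, I.sem c = I'.sem c := by
  intro c
  induction c with
  | top => rfl
  | bot => rfl
  | atom A => simp [Interp.sem, ha]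
  | conj c d ihc ihd => simp [Interp.sem, ihc, ihd]
  | ex r c ih => simp [Interp.sem, ih, hr]

/-- Each expansion rule preserves consistency: if `A ∪ T` is
consistent with `T` normalized, then one application of any expansion rule
yields a consistent ontology `A' ∪ T`. -/
theorem stmt5 {C R Ind : Type} (T : TBox C R) (A A' : ABox C R Ind)
    (hnorm : normalized T) (hcons : consistentO A T)
    (hstep : Step T (fun B => consistentO B T) A A') :
    consistentO A' T := by
  classical
  rcases hstep with hcore | hex
  · obtain ⟨δ, I, hA, hT⟩ := hcons
    cases hcore with
    | conjRule hD hc _ =>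
      refine ⟨δ, I, ?_, hT⟩
      intro ax hax
      rcases hax with rfl | hax
      · exact At_sem I _ _ hc (hA _ hD)
      · exact hA _ hax
    | ex1 hr hB _ _ =>
      refine ⟨δ, I, ?_, hT⟩
      intro ax hax
      rcases hax with rfl | hax
      · exact ⟨_, hA _ hr, hA _ hB⟩
      · exact hA _ hax
    | sub hg hw _ =>
      refine ⟨δ, I, ?_, hT⟩
      intro ax hax
      rcases hax with rfl | hax
      · apply hT _ hg
        rcases hw with h | ⟨c, d, heq, hc, hd⟩
        · exact hA _ h
        · rw [heq]; exact ⟨hA _ hc, hA _ hd⟩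
      · exact hA _ hax
  · cases hex with
    | reuse _ _ hgood => exact hgood
    | @fresh r a d E hE _ _ hd =>
      obtain ⟨δ, I, hA, hT⟩ := hcons
      have hex : I.indI a ∈ I.sem (ELConcept.ex r E) := hA _ hE
      obtain ⟨y, hry, hyE⟩ := hex
      set I' : Interp C R Ind δ :=
        ⟨I.atomI, I.roleI, fun x => if x = d then y else I.indI x⟩ with hI'
      have hsem : ∀ c, I'.sem c = I.sem c := sem_eq_of I' I rfl rfl
      have hne : ∀ x, mentionsA x A → x ≠ d → True := fun _ _ _ => trivial
      have had : a ≠ d := by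
        intro h; subst h; exact hd ⟨_, hE, rfl⟩
      have hIa : I'.indI a = I.indI a := by simp [hI', had]
      have hId : I'.indI d = y := by simp [hI']
      refine ⟨δ, I', ?_, ?_⟩
      · intro ax hax
        rcases hax with rfl | hax
        · show (I'.indI a, I'.indI d) ∈ I'.roleI r
          rw [hIa, hId]; exact hry
        rcases hax with rfl | hax
        · show I'.indI d ∈ I'.sem E
          rw [hId, hsem]; exact hyE
        rcases hax with rfl | hax
        · show I'.indI d ∈ I'.sem ELConcept.top
          trivial
        · cases ax with
          | concept c b =>
            have hbd : b ≠ d := by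
              intro h; exact hd ⟨_, hax, h⟩
            show I'.indI b ∈ I'.sem c
            have : I'.indI b = I.indI b := by simp [hI', hbd]
            rw [this, hsem]; exact hA _ hax
          | role s b c =>
            have hbd : b ≠ d := by
              intro h; exact hd ⟨_, hax, Or.inl h⟩
            have hcd : c ≠ d := by
              intro h; exact hd ⟨_, hax, Or.inr h⟩
            show (I'.indI b, I'.indI c) ∈ I'.roleI s
            have h1 : I'.indI b = I.indI b := by simp [hI', hbd]
            have h2 : I'.indI c = I.indI c := by simp [hI', hcd]
            rw [h1, h2]; exact hA _ hax
      · intro g hg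
        show I'.sem g.1 ⊆ I'.sem g.2
        rw [hsem, hsem]; exact hT g hg
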